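/- Let K be a field, A, B nonnegative integers, Λ ⊆ {0,...,A} × {0,...,B} a ladder with associated ladder region L, and M = [u_1,...,u_n | v_1,...,v_n] a bivector of positive integers with u_1 < ... < u_n ≤ A+1 and v_1 < ... < v_n ≤ B+1. Let A^{(i)}, E^{(i)}, L^{(i)}, B^{(i)} be as in the context. If for each i = 1, ..., n the set B^{(i)} has exactly E^{(i)}_1 − A^{(i)}_1 + E^{(i)}_2 − A^{(i)}_2 + 1 elements, then the cardinality d of ⋃_{i=1}^n B^{(i)} equals (A + B + 3)n − Σ_{i=1}^n (u_i + v_i); in particular, the sets B^{(1)}, ..., B^{(n)} are pairwise disjoint. -/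

import Mathlib

/-- A lattice path from `A` to `B`: a list of points of `ℤ × ℤ` whose consecutive
differences are the unit steps `(1,0)` or `(0,1)`, starting at `A` and ending at `B`. -/
def IsLatticePathFrom (P : List (ℤ × ℤ)) (A B : ℤ × ℤ) : Prop :=
  P.Chain' (fun p q => q = (p.1 + 1, p.2) ∨ q = (p.1, p.2 + 1)) ∧
    P.head? = some A ∧ P.getLast? = some B

/-- The list of NE-turns of a lattice path: the points of the path that are the end
point of a vertical step and at the same time the starting point of a horizontal step. -/
def NETurns : List (ℤ × ℤ) → List (ℤ × ℤ)
  | p :: q :: r :: rest =>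
      (if q = (p.1, p.2 + 1) ∧ r = (q.1 + 1, q.2) then [q] else []) ++ NETurns (q :: r :: rest)
  | _ => []

/-- `(x,y)` lies weakly south-east of `S` if `x ≥ S.1` or `y ≤ S.2`. -/
def WeaklySE (p S : ℤ × ℤ) : Prop := S.1 ≤ p.1 ∨ p.2 ≤ S.2

/-- `(x,y)` lies weakly north-west of `T` if `x ≤ T.1` or `y ≥ T.2`. -/
def WeaklyNW (p T : ℤ × ℤ) : Prop := p.1 ≤ T.1 ∨ T.2 ≤ p.2

/-- A path stays weakly south-east of `S` if every point on it does. -/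
def StaysSE (P : List (ℤ × ℤ)) (S : ℤ × ℤ) : Prop := ∀ p ∈ P, WeaklySE p S

/-- A path stays weakly north-west of `T` if every point on it does. -/
def StaysNW (P : List (ℤ × ℤ)) (T : ℤ × ℤ) : Prop := ∀ p ∈ P, WeaklyNW p T

/-- A family of lattice paths is non-intersecting if no two of its members share a point. -/
def NonIntersecting {n : ℕ} (F : Fin n → List (ℤ × ℤ)) : Prop :=
  ∀ i j, i ≠ j → ∀ p, p ∈ F i → p ∉ F j

/-- `Λ` is a ladder: together with any two positions `(i,j) ≤ (i',j')` it contains the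
whole interval between them. -/
def IsLadder {A B : ℕ} (Λ : Set (Fin (A + 1) × Fin (B + 1))) : Prop :=
  ∀ p ∈ Λ, ∀ p' ∈ Λ, p.1 ≤ p'.1 → p.2 ≤ p'.2 →
    ∀ (s : Fin (A + 1)) (t : Fin (B + 1)),
      p.1 ≤ s → s ≤ p'.1 → p.2 ≤ t → t ≤ p'.2 → (s, t) ∈ Λ

/-- The ladder region associated with a ladder `Λ`: the set of points `(j, A−i)` for
`(i,j) ∈ Λ`. -/
def ladderRegion {A B : ℕ} (Λ : Set (Fin (A + 1) × Fin (B + 1))) : Set (ℤ × ℤ) :=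
  {p | ∃ q ∈ Λ, p = (((q.2 : ℕ) : ℤ), (A : ℤ) - ((q.1 : ℕ) : ℤ))}

open Classical in
/-- The matrix `Y` associated with a ladder `Λ`: the entry at a position of `Λ` is the
corresponding variable of the polynomial ring `K[Y]`, all other entries are `0`. -/
noncomputable def ladderMatrix (K : Type*) [Field K] {A B : ℕ}
    (Λ : Set (Fin (A + 1) × Fin (B + 1))) :
    Matrix (Fin (A + 1)) (Fin (B + 1)) (MvPolynomial {q // q ∈ Λ} K) :=
  fun i j => if h : (i, j) ∈ Λ then MvPolynomial.X ⟨(i, j), h⟩ else 0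

/-- The ladder determinantal ideal cogenerated by the bivector
`M = [u 1,...,u n | v 1,...,v n]` (with the conventions `u (n+1) = A+2`, `v (n+1) = B+2`
imposed as hypotheses in the theorems): it is generated, for `1 ≤ t ≤ n+1`, by the `t×t`
minors of `Y` all of whose positions lie in `Λ` and whose rows all lie among the last
`u t − 1` rows, or whose columns all lie among the last `v t − 1` columns. -/
noncomputable def ladderIdeal (K : Type*) [Field K] {A B : ℕ}
    (Λ : Set (Fin (A + 1) × Fin (B + 1))) (n : ℕ) (u v : ℕ → ℕ) :
    Ideal (MvPolynomial {q // q ∈ Λ} K) :=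
  Ideal.span {f | ∃ t : ℕ, 1 ≤ t ∧ t ≤ n + 1 ∧
    ∃ (r : Fin t → Fin (A + 1)) (c : Fin t → Fin (B + 1)),
      StrictMono r ∧ StrictMono c ∧ (∀ k l, (r k, c l) ∈ Λ) ∧
      ((∀ k, A + 2 ≤ (r k : ℕ) + u t) ∨ (∀ l, B + 2 ≤ (c l : ℕ) + v t)) ∧
      f = (((ladderMatrix K Λ).submatrix r c).det)}

/-- The dimension of the degree-`ℓ` homogeneous component of the quotient of a polynomial
ring by a (homogeneous) ideal `I`: the image of the space of homogeneous polynomials of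
degree `ℓ` in the quotient. -/
noncomputable def quotDim (K : Type*) [Field K] {σ : Type*}
    (I : Ideal (MvPolynomial σ K)) (ℓ : ℕ) : ℕ :=
  Module.finrank K
    (Submodule.map (Ideal.Quotient.mkₐ K I).toLinearMap
      (MvPolynomial.homogeneousSubmodule σ K ℓ))

/-- The Hilbert series `Σ_ℓ dim_K (R_M(Y))_ℓ zˡ`, as a power series over `ℤ`. -/
noncomputable def hilbertSeries (K : Type*) [Field K] {σ : Type*}
    (I : Ideal (MvPolynomial σ K)) : PowerSeries ℤ :=
  PowerSeries.mk fun ℓ => (quotDim K I ℓ : ℤ)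

/-- The recursively defined regions `L⁽ⁱ⁾` of Theorem 5, counted downwards from
`L⁽ⁿ⁺¹⁾ = L`; `Lseq L E1 A2 j` is `L⁽ⁿ⁺¹⁻ʲ⁾`, where `E1 j` resp. `A2 j` are the first
coordinate of `E⁽ⁿ⁻ʲ⁾` resp. the second coordinate of `A⁽ⁿ⁻ʲ⁾`. -/
def Lseq (L : Set (ℤ × ℤ)) (E1 A2 : ℕ → ℤ) : ℕ → Set (ℤ × ℤ)
  | 0 => L
  | j + 1 => {P ∈ Lseq L E1 A2 j |
      P.1 ≤ E1 j ∧ A2 j ≤ P.2 ∧ (P.1 + 1, P.2 - 1) ∈ Lseq L E1 A2 j}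

/-- The region `L⁽ⁱ⁾` of Theorem 5 (for `1 ≤ i ≤ n+1`), for a ladder `Λ` with ladder
region `L` and a bivector given by `u`, `v` (indexed `1,...,n`). -/
def ladderLset (A B : ℕ) (Λ : Set (Fin (A + 1) × Fin (B + 1))) (n : ℕ)
    (u v : ℕ → ℕ) (i : ℕ) : Set (ℤ × ℤ) :=
  Lseq (ladderRegion Λ) (fun j => (B : ℤ) - (v (j + 1) : ℤ) + 1)
    (fun j => (u (j + 1) : ℤ) - 1) (n + 1 - i)

/-- The set `B⁽ⁱ⁾` of Theorem 5 (for `1 ≤ i ≤ n`). -/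
def ladderBset (A B : ℕ) (Λ : Set (Fin (A + 1) × Fin (B + 1))) (n : ℕ)
    (u v : ℕ → ℕ) (i : ℕ) : Set (ℤ × ℤ) :=
  {P ∈ ladderLset A B Λ n u v i | (P.1 + 1, P.2 - 1) ∉ ladderLset A B Λ n u v i}

/-- The families of non-intersecting lattice paths appearing in Theorem 5: `P i` runs
from `A⁽ⁱ⁾ = (0, u (n−i+1) − 1)` to `E⁽ⁱ⁾ = (B − v (n−i+1) + 1, A)` and has all its
NE-turns in `L⁽ⁱ⁾ ∖ B⁽ⁱ⁾` (here the index `i : Fin n` corresponds to `i+1`). -/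
def AdmissibleFamily (A B : ℕ) (Λ : Set (Fin (A + 1) × Fin (B + 1))) (n : ℕ)
    (u v : ℕ → ℕ) (F : Fin n → List (ℤ × ℤ)) : Prop :=
  NonIntersecting F ∧
  (∀ i : Fin n, IsLatticePathFrom (F i)
    ((0 : ℤ), (u (n - (i : ℕ)) : ℤ) - 1)
    ((B : ℤ) - (v (n - (i : ℕ)) : ℤ) + 1, (A : ℤ))) ∧
  (∀ i : Fin n, ∀ pt ∈ NETurns (F i),
    pt ∈ ladderLset A B Λ n u v ((i : ℕ) + 1) \ ladderBset A B Λ n u v ((i : ℕ) + 1))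

/-- The generating function `GF = Σ_𝐏 z^{NE(𝐏)}` over all families of non-intersecting
lattice paths as in Theorem 5, as a power series over `ℤ`. -/
noncomputable def pathGF (A B : ℕ) (Λ : Set (Fin (A + 1) × Fin (B + 1))) (n : ℕ)
    (u v : ℕ → ℕ) : PowerSeries ℤ :=
  PowerSeries.mk fun k =>
    (Nat.card {F : Fin n → List (ℤ × ℤ) // AdmissibleFamily A B Λ n u v F ∧
      (∑ i : Fin n, (NETurns (F i)).length) = k} : ℤ)


theorem Lseq_mono_aux (L : Set (ℤ × ℤ)) (E1 A2 : ℕ → ℤ) {j k : ℕ} (h : j ≤ k) :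
    Lseq L E1 A2 k ⊆ Lseq L E1 A2 j := by
  induction k with
  | zero => simp_all
  | succ k ih =>
    rcases Nat.lt_succ_iff_lt_or_eq.mp (Nat.lt_succ_of_le h) with h' | h'
    · exact fun P hP => ih (Nat.lt_succ_iff.mp h') hP.1
    · subst h'; exact fun P hP => hP

theorem Bset_disj_lt_aux (A B n : ℕ) (Λ : Set (Fin (A + 1) × Fin (B + 1)))
    (u v : ℕ → ℕ) {i j : ℕ} (hij : i < j) (hj : j ≤ n) :
    ladderBset A B Λ n u v i ∩ ladderBset A B Λ n u v j = ∅ := by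
  ext P
  simp only [Set.mem_inter_iff, Set.mem_empty_iff_false, iff_false, not_and]
  rintro ⟨hPi, -⟩ ⟨-, hPj⟩
  have h1 : n + 1 - j + 1 ≤ n + 1 - i := by omega
  have hP' : P ∈ Lseq (ladderRegion Λ) (fun j => (B : ℤ) - (v (j + 1) : ℤ) + 1)
      (fun j => (u (j + 1) : ℤ) - 1) (n + 1 - j + 1) :=
    Lseq_mono_aux _ _ _ h1 hPi
  exact hPj hP'.2.2.2

theorem remark_d_formula (A B n : ℕ) (hn : 1 ≤ n)
    (Λ : Set (Fin (A + 1) × Fin (B + 1))) (hΛ : IsLadder Λ)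
    (u v : ℕ → ℕ)
    (hu_mono : ∀ i j, 1 ≤ i → i < j → j ≤ n → u i < u j)
    (hv_mono : ∀ i j, 1 ≤ i → i < j → j ≤ n → v i < v j)
    (hu_range : ∀ i, 1 ≤ i → i ≤ n → 1 ≤ u i ∧ u i ≤ A + 1)
    (hv_range : ∀ i, 1 ≤ i → i ≤ n → 1 ≤ v i ∧ v i ≤ B + 1)
    (hcard : ∀ i, 1 ≤ i → i ≤ n →
      ((ladderBset A B Λ n u v i).ncard : ℤ) =
        (((B : ℤ) - (v (n - i + 1) : ℤ) + 1) - 0) +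
          ((A : ℤ) - ((u (n - i + 1) : ℤ) - 1)) + 1) :
    (((⋃ i : Fin n, ladderBset A B Λ n u v ((i : ℕ) + 1)).ncard : ℤ) =
        ((A : ℤ) + (B : ℤ) + 3) * n -
          ∑ i ∈ Finset.Icc 1 n, ((u i : ℤ) + (v i : ℤ))) ∧
      (∀ i j, 1 ≤ i → i ≤ n → 1 ≤ j → j ≤ n → i ≠ j →
        ladderBset A B Λ n u v i ∩ ladderBset A B Λ n u v j = ∅) := by
  classical
  have hdisj : ∀ i j, 1 ≤ i → i ≤ n → 1 ≤ j → j ≤ n → i ≠ j →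
      ladderBset A B Λ n u v i ∩ ladderBset A B Λ n u v j = ∅ := by
    intro i j hi1 hin hj1 hjn hne
    rcases lt_or_gt_of_ne hne with h | h
    · exact Bset_disj_lt_aux A B n Λ u v h hjn
    · rw [Set.inter_comm]; exact Bset_disj_lt_aux A B n Λ u v h hin
  refine ⟨?_, hdisj⟩
  have hfin : ∀ k : Fin n, (ladderBset A B Λ n u v ((k : ℕ) + 1)).Finite := by
    intro k
    by_contra h
    have h' : (ladderBset A B Λ n u v ((k : ℕ) + 1)).Infinite := h
    have hc := hcard ((k : ℕ) + 1) (by omega) (by omega)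
    rw [h'.ncard] at hc
    have hk : n - ((k : ℕ) + 1) + 1 = n - (k : ℕ) := by omega
    rw [hk] at hc
    have hu := (hu_range (n - (k : ℕ)) (by omega) (by omega)).2
    have hv := (hv_range (n - (k : ℕ)) (by omega) (by omega)).2
    omega
  have hU : (⋃ k : Fin n, ladderBset A B Λ n u v ((k : ℕ) + 1)) =
      ↑(Finset.univ.biUnion fun k : Fin n => (hfin k).toFinset) := by
    ext P
    simp [Set.Finite.mem_toFinset]
  rw [hU, Set.ncard_coe_finset]
  rw [Finset.card_biUnion (by
    intro a _ b _ hab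
    rw [Function.onFun, Finset.disjoint_left]
    intro P hPa hPb
    have hne : (a : ℕ) + 1 ≠ (b : ℕ) + 1 := fun h => hab (Fin.ext (Nat.succ_injective h))
    have := hdisj ((a : ℕ) + 1) ((b : ℕ) + 1) (by omega) (by omega) (by omega) (by omega) hne
    have hmem : P ∈ ladderBset A B Λ n u v ((a : ℕ) + 1) ∩ ladderBset A B Λ n u v ((b : ℕ) + 1) :=
      ⟨(Set.Finite.mem_toFinset _).mp hPa, (Set.Finite.mem_toFinset _).mp hPb⟩
    rw [this] at hmem
    exact hmem)]
  have hval : ∀ k : Fin n, (((hfin k).toFinset.card : ℤ)) =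
      ((A : ℤ) + (B : ℤ) + 3) - ((u (n - (k : ℕ)) : ℤ) + (v (n - (k : ℕ)) : ℤ)) := by
    intro k
    rw [← Set.ncard_eq_toFinset_card _ (hfin k)]
    have hc := hcard ((k : ℕ) + 1) (by omega) (by omega)
    have hk : n - ((k : ℕ) + 1) + 1 = n - (k : ℕ) := by omega
    rw [hk] at hc
    rw [hc]; ring
  push_cast
  rw [Finset.sum_congr rfl fun k _ => hval k]
  have hre : ∑ k : Fin n, (((A : ℤ) + (B : ℤ) + 3) - ((u (n - (k : ℕ)) : ℤ) + (v (n - (k : ℕ)) : ℤ)))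
      = ∑ k ∈ Finset.range n, (((A : ℤ) + (B : ℤ) + 3) - ((u (n - k) : ℤ) + (v (n - k) : ℤ))) :=
    Fin.sum_univ_eq_sum_range (fun k => ((A : ℤ) + (B : ℤ) + 3) - ((u (n - k) : ℤ) + (v (n - k) : ℤ))) n
  rw [hre]
  have hre2 : ∑ k ∈ Finset.range n, (((A : ℤ) + (B : ℤ) + 3) - ((u (n - k) : ℤ) + (v (n - k) : ℤ)))
      = ∑ k ∈ Finset.range n, (((A : ℤ) + (B : ℤ) + 3) - ((u (n - 1 - k + 1) : ℤ) + (v (n - 1 - k + 1) : ℤ))) := by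
    refine Finset.sum_congr rfl fun k hk => ?_
    have : n - k = n - 1 - k + 1 := by
      have := Finset.mem_range.mp hk; omega
    rw [this]
  rw [hre2, Finset.sum_range_reflect (fun m => ((A : ℤ) + (B : ℤ) + 3) - ((u (m + 1) : ℤ) + (v (m + 1) : ℤ))) n]
  have hicc : ∑ i ∈ Finset.Icc 1 n, ((u i : ℤ) + (v i : ℤ))
      = ∑ j ∈ Finset.range n, ((u (j + 1) : ℤ) + (v (j + 1) : ℤ)) := by
    rw [show Finset.Icc 1 n = Finset.Ico 1 (n + 1) from (by ext x; simp only [Finset.mem_Icc, Finset.mem_Ico]; omega)]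
    rw [Finset.sum_Ico_eq_sum_range]
    simp only [Nat.add_sub_cancel]
    exact Finset.sum_congr rfl fun k _ => by rw [Nat.add_comm 1 k]
  rw [hicc, Finset.sum_sub_distrib, Finset.sum_const, Finset.card_range]
  push_cast
  ring
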